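/- arXiv:1306.3203 — 2 statements merged into one kernel-verified Lean document; each statement's English description precedes it below -/
import Mathlib

section
/- Closed-form exponentiated-gradient solution: for ρ > 0, c ∈ ℝⁿ, and z in the interior of the unit simplex, the minimizer over the unit simplex of x ↦ ⟨c, x⟩ + ρ·KL(x, z) is given componentwise by xᵢ = zᵢ exp(−cᵢ/ρ) / Σⱼ zⱼ exp(−cⱼ/ρ). -/
open Finset

/-- Closed-form exponentiated-gradient solution: for ρ > 0, c ∈ ℝⁿ and z in the
interior of the unit simplex, the minimizer over the simplex of
`x ↦ ⟪c,x⟫ + ρ·KL(x,z)` is `xᵢ = zᵢ exp(-cᵢ/ρ) / Σⱼ zⱼ exp(-cⱼ/ρ)`. -/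
theorem exponentiated_gradient_closed_form {n : ℕ} (hn : 0 < n)
    (c z : Fin n → ℝ) (ρ : ℝ) (hρ : 0 < ρ)
    (hz0 : ∀ i, 0 < z i) (hz1 : ∑ i, z i = 1) :
    let xstar : Fin n → ℝ :=
      fun i => z i * Real.exp (-c i / ρ) / ∑ j, z j * Real.exp (-c j / ρ)
    let J : (Fin n → ℝ) → ℝ :=
      fun x => (∑ i, c i * x i) + ρ * ∑ i, x i * Real.log (x i / z i)
    (∀ i, 0 ≤ xstar i) ∧ (∑ i, xstar i) = 1 ∧
    ∀ w : Fin n → ℝ, (∀ i, 0 ≤ w i) → (∑ i, w i) = 1 → J xstar ≤ J w := by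
  intro xstar J
  set S : ℝ := ∑ j, z j * Real.exp (-c j / ρ) with hS
  have hSpos : 0 < S := by
    apply Finset.sum_pos
    · intro i _
      exact mul_pos (hz0 i) (Real.exp_pos _)
    · exact Finset.univ_nonempty_iff.mpr (Fin.pos_iff_nonempty.mp hn)
  have hxpos : ∀ i, 0 < xstar i := fun i =>
    div_pos (mul_pos (hz0 i) (Real.exp_pos _)) hSpos
  have hxsum : ∑ i, xstar i = 1 := by
    simp only [xstar]
    rw [← Finset.sum_div, ← hS, div_self (ne_of_gt hSpos)]
  -- key pointwise identity: for w i ≥ 0,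
  -- c i * w i + ρ * w i * log (w i / z i) = ρ * w i * log (w i / xstar i) - ρ * w i * log S
  have key : ∀ (w : Fin n → ℝ), (∀ i, 0 ≤ w i) → ∀ i,
      c i * w i + ρ * (w i * Real.log (w i / z i)) =
      ρ * (w i * Real.log (w i / xstar i)) - ρ * (w i * Real.log S) := by
    intro w hw i
    rcases eq_or_lt_of_le (hw i) with h0 | h0
    · simp [← h0]
    · have hzi := hz0 i
      have hxi := hxpos i
      have hlog : Real.log (w i / z i) =
          Real.log (w i / xstar i) + Real.log (xstar i / z i) := by
        rw [← Real.log_mul (by positivity) (by positivity)]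
        congr 1
        field_simp
      have hlogx : Real.log (xstar i / z i) = -c i / ρ - Real.log S := by
        have : xstar i / z i = Real.exp (-c i / ρ) / S := by
          simp only [xstar]
          rw [← hS]
          field_simp
        rw [this, Real.log_div (Real.exp_ne_zero _) (ne_of_gt hSpos),
          Real.log_exp]
      rw [hlog, hlogx]
      field_simp
      ring
  have hJ : ∀ (w : Fin n → ℝ), (∀ i, 0 ≤ w i) → (∑ i, w i) = 1 →
      J w = ρ * (∑ i, w i * Real.log (w i / xstar i)) - ρ * Real.log S := by
    intro w hw hw1
    simp only [J]
    rw [Finset.mul_sum, ← Finset.sum_add_distrib]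
    have : ∀ i ∈ Finset.univ, c i * w i + ρ * (w i * Real.log (w i / z i)) =
        ρ * (w i * Real.log (w i / xstar i)) - ρ * (w i * Real.log S) :=
      fun i _ => key w hw i
    rw [Finset.sum_congr rfl this, Finset.sum_sub_distrib, ← Finset.mul_sum,
      ← Finset.mul_sum]
    congr 1
    rw [← Finset.sum_mul, hw1, one_mul]
  refine ⟨fun i => le_of_lt (hxpos i), hxsum, ?_⟩
  intro w hw hw1
  rw [hJ w hw hw1, hJ xstar (fun i => le_of_lt (hxpos i)) hxsum]
  have hx0 : ∑ i, xstar i * Real.log (xstar i / xstar i) = 0 := by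
    apply Finset.sum_eq_zero
    intro i _
    rw [div_self (ne_of_gt (hxpos i)), Real.log_one, mul_zero]
  rw [hx0]
  have hgibbs : 0 ≤ ∑ i, w i * Real.log (w i / xstar i) := by
    have hterm : ∀ i, w i - xstar i ≤ w i * Real.log (w i / xstar i) := by
      intro i
      rcases eq_or_lt_of_le (hw i) with h0 | h0
      · rw [← h0]; simp [le_of_lt (hxpos i)]
      · have h1 : Real.log (xstar i / w i) ≤ xstar i / w i - 1 :=
          Real.log_le_sub_one_of_pos (div_pos (hxpos i) h0)
        have h2 : Real.log (xstar i / w i) = - Real.log (w i / xstar i) := by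
          rw [← Real.log_inv]
          congr 1
          field_simp
        rw [h2] at h1
        have := mul_le_mul_of_nonneg_left h1 (le_of_lt h0)
        have h3 : w i * (xstar i / w i) = xstar i := by field_simp
        nlinarith
    calc (0:ℝ) = ∑ i, (w i - xstar i) := by
            rw [Finset.sum_sub_distrib, hw1, hxsum, sub_self]
      _ ≤ _ := Finset.sum_le_sum (fun i _ => hterm i)
  nlinarith [mul_nonneg (le_of_lt hρ) hgibbs]
end

section
/- Subgradient-based objective bound (one-step ADMM inequality for the x-update): suppose f is convex and x_{t+1} satisfies the first-order optimality condition −Aᵀ(y_t + ρ(−∇φ(c − Ax_{t+1}) + ∇φ(Bz_t))) ∈ ∂f(x_{t+1}), and Ax* + Bz* = c. Then f(x_{t+1}) − f(x*) ≤ −⟨y_t, Ax_{t+1} + Bz* − c⟩ + ρ(B_φ(Bz*, Bz_t) − B_φ(Bz*, c − Ax_{t+1}) − B_φ(c − Ax_{t+1}, Bz_t)). -/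
open RealInnerProductSpace

/-- One-step ADMM inequality for the x-update: if f is convex,
`-Aᵀ(y_t + ρ(-∇φ(c - A x_{t+1}) + ∇φ(B z_t))) ∈ ∂f(x_{t+1})` and `A x* + B z* = c`,
then `f(x_{t+1}) - f(x*) ≤ -⟪y_t, A x_{t+1} + B z* - c⟫ +
ρ(B_φ(Bz*, Bz_t) - B_φ(Bz*, c - A x_{t+1}) - B_φ(c - A x_{t+1}, B z_t))`. -/
theorem badmm_x_update_bound {m n₁ n₂ : ℕ}
    (f : EuclideanSpace ℝ (Fin n₁) → ℝ) (hf : ConvexOn ℝ Set.univ f)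
    (φ : EuclideanSpace ℝ (Fin m) → ℝ)
    (φ' : EuclideanSpace ℝ (Fin m) → EuclideanSpace ℝ (Fin m))
    (hφ : ∀ v, HasGradientAt φ (φ' v) v)
    (A : EuclideanSpace ℝ (Fin n₁) →L[ℝ] EuclideanSpace ℝ (Fin m))
    (B : EuclideanSpace ℝ (Fin n₂) →L[ℝ] EuclideanSpace ℝ (Fin m))
    (c : EuclideanSpace ℝ (Fin m)) (ρ : ℝ) (hρ : 0 < ρ)
    (xnext xstar : EuclideanSpace ℝ (Fin n₁))
    (zt zstar : EuclideanSpace ℝ (Fin n₂))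
    (yt : EuclideanSpace ℝ (Fin m))
    (hsub : ∀ u, f xnext +
      ⟪-(ContinuousLinearMap.adjoint A)
          (yt + ρ • (-(φ' (c - A xnext)) + φ' (B zt))), u - xnext⟫ ≤ f u)
    (hfeas : A xstar + B zstar = c) :
    f xnext - f xstar ≤
      -⟪yt, A xnext + B zstar - c⟫
        + ρ * ((φ (B zstar) - φ (B zt) - ⟪φ' (B zt), B zstar - B zt⟫)
          - (φ (B zstar) - φ (c - A xnext) - ⟪φ' (c - A xnext), B zstar - (c - A xnext)⟫)
          - (φ (c - A xnext) - φ (B zt) - ⟪φ' (B zt), (c - A xnext) - B zt⟫)) := by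
  have h := hsub xstar
  rw [inner_neg_left, ContinuousLinearMap.adjoint_inner_left] at h
  have hA : A xstar = c - B zstar := eq_sub_of_add_eq hfeas
  have hmap : A (xstar - xnext) = c - B zstar - A xnext := by rw [map_sub, hA]
  rw [hmap] at h
  have hexp : ⟪yt + ρ • (-(φ' (c - A xnext)) + φ' (B zt)), c - B zstar - A xnext⟫
      = ⟪yt, c - B zstar - A xnext⟫
        + ρ * (⟪φ' (B zt), c - B zstar - A xnext⟫ - ⟪φ' (c - A xnext), c - B zstar - A xnext⟫) := by
    rw [inner_add_left, real_inner_smul_left, inner_add_left, inner_neg_left]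
    ring
  rw [hexp] at h
  have e1 : ⟪yt, c - B zstar - A xnext⟫ = -⟪yt, A xnext + B zstar - c⟫ := by
    rw [← inner_neg_right]; congr 1
    simp [sub_eq_add_neg]; abel
  have e2 : ⟪φ' (B zt), c - B zstar - A xnext⟫
      = ⟪φ' (B zt), (c - A xnext) - B zt⟫ - ⟪φ' (B zt), B zstar - B zt⟫ := by
    rw [← inner_sub_right]; congr 1; abel
  have e3 : ⟪φ' (c - A xnext), c - B zstar - A xnext⟫
      = -⟪φ' (c - A xnext), B zstar - (c - A xnext)⟫ := by
    rw [← inner_neg_right]; congr 1; abel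
  rw [e1, e2, e3] at h
  nlinarith [h]
end
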